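/- Let X be a Hausdorff space which is a continuous image of some compact linearly ordered topological space. Then there exist a compact linearly ordered topological space K and a continuous surjection f : K → X such that: (1) for every k ∈ K, χ(k, K) ≤ χ(f(k), X), and hence χ(K) ≤ χ(X); and (2) c(K) = c(X), d(K) = d(X), and w(K) = w(X). -/

import Mathlib

set_option linter.unusedSectionVars false
set_option linter.unusedVariables false
set_option maxHeartbeats 2000000


universe u

open Set Topology

/-- The character of a space `X` at a point `x`: the least cardinality of a
neighborhood base of `X` at `x`. -/
noncomputable def nhdsChar (X : Type u) [TopologicalSpace X] (x : X) : Cardinal.{u} :=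
  sInf { c | ∃ B : Set (Set X), Cardinal.mk B = c ∧ (∀ U ∈ B, U ∈ nhds x) ∧
      ∀ V ∈ nhds x, ∃ U ∈ B, U ⊆ V }

/-- The character of a space: `χ(X) = sup_{x ∈ X} χ(x, X)`. -/
noncomputable def spaceChar (X : Type u) [TopologicalSpace X] : Cardinal.{u} :=
  ⨆ x : X, nhdsChar X x

/-- The cellularity of a space: the supremum of cardinalities of pairwise disjoint
families of nonempty open subsets. -/
noncomputable def cellularity (X : Type u) [TopologicalSpace X] : Cardinal.{u} :=
  sSup { c | ∃ 𝒰 : Set (Set X), Cardinal.mk 𝒰 = c ∧ (∀ U ∈ 𝒰, IsOpen U ∧ U.Nonempty) ∧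
      𝒰.PairwiseDisjoint id }

/-- The density of a space: the least cardinality of a dense subset. -/
noncomputable def density (X : Type u) [TopologicalSpace X] : Cardinal.{u} :=
  sInf { c | ∃ D : Set X, Cardinal.mk D = c ∧ Dense D }

/-- The weight of a space: the least cardinality of a base for the topology. -/
noncomputable def weight (X : Type u) [TopologicalSpace X] : Cardinal.{u} :=
  sInf { c | ∃ B : Set (Set X), Cardinal.mk B = c ∧ TopologicalSpace.IsTopologicalBasis B }

/-- A surjective map is irreducible if no proper closed subset maps onto the codomain. -/
def IsIrreducibleMap {K : Type*} {X : Type*} [TopologicalSpace K] [TopologicalSpace X]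
    (f : K → X) : Prop :=
  Function.Surjective f ∧ ∀ A : Set K, IsClosed A → A ≠ univ → f '' A ≠ univ

/-- `C` is an order component of `A`: a maximal convex subset of `A`. -/
def IsOrderComponent {K : Type*} [LinearOrder K] (A C : Set K) : Prop :=
  C ⊆ A ∧ C.OrdConnected ∧ ∀ C' : Set K, C ⊆ C' → C' ⊆ A → C'.OrdConnected → C' = C

/-- A map from a linearly ordered set is order-light if every order component of every
fiber is a singleton. -/
def OrderLight {K : Type*} {X : Type*} [LinearOrder K] (f : K → X) : Prop :=
  ∀ x : X, ∀ C : Set K, IsOrderComponent (f ⁻¹' {x}) C → ∃ k, C = {k}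

/-- The countable chain condition: every pairwise disjoint family of nonempty open sets
is countable. -/
def CCC (X : Type*) [TopologicalSpace X] : Prop :=
  ∀ 𝒰 : Set (Set X), (∀ U ∈ 𝒰, IsOpen U ∧ U.Nonempty) → 𝒰.PairwiseDisjoint id → 𝒰.Countable

/-- A space is non-archimedean if it has a base any two members of which are either
disjoint or comparable by inclusion. -/
def NonArchimedean (X : Type*) [TopologicalSpace X] : Prop :=
  ∃ B : Set (Set X), TopologicalSpace.IsTopologicalBasis B ∧
    ∀ U ∈ B, ∀ V ∈ B, Disjoint U V ∨ U ⊆ V ∨ V ⊆ U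

/-- A space is perfectly normal if it is normal and every closed set is a Gδ-set. -/
def PerfNormal (X : Type*) [TopologicalSpace X] : Prop :=
  NormalSpace X ∧ ∀ A : Set X, IsClosed A → IsGδ A

/-- `X` is a continuous image of some compact linearly ordered topological space
(a linearly ordered set equipped with its order topology). -/
def ContinuousImageOfCompactLOTS (X : Type u) [TopologicalSpace X] : Prop :=
  ∃ (K : Type u) (lo : LinearOrder K) (tK : TopologicalSpace K),
    letI := lo; letI := tK;
    OrderTopology K ∧ CompactSpace K ∧ ∃ f : K → X, Continuous f ∧ Function.Surjective f

/-- A closed set `A` is a strong T-set: the boundary of each connected component of the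
complement consists of exactly two points, and each such component is homeomorphic to the
open unit interval `(0,1)`. -/
def IsStrongTSet {Y : Type*} [TopologicalSpace Y] (A : Set Y) : Prop :=
  IsClosed A ∧ ∀ x ∈ Aᶜ,
    (∃ a b : Y, a ≠ b ∧ frontier (connectedComponentIn Aᶜ x) = {a, b}) ∧
    Nonempty (↥(connectedComponentIn Aᶜ x) ≃ₜ ↥(Ioo (0:ℝ) 1))

/-- Souslin's Hypothesis: every ccc LOTS is separable. -/
def SouslinHypothesis : Prop :=
  ∀ (L : Type u) (lo : LinearOrder L) (tL : TopologicalSpace L),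
    letI := lo; letI := tL;
    OrderTopology L → CCC L → TopologicalSpace.SeparableSpace L


open Set Topology TopologicalSpace Function

namespace CIPB

variable {α β : Type*}

/-! ### Order components -/

section OC
variable [LinearOrder α]

/-- The order component of `a` in `S`. -/
def OC (a : α) (S : Set α) : Set α := {b | Set.uIcc a b ⊆ S}

lemma self_mem_OC {a : α} {S : Set α} (ha : a ∈ S) : a ∈ OC a S := by
  simp [OC, Set.uIcc_self, ha]

lemma OC_subset {a : α} {S : Set α} : OC a S ⊆ S := fun _ hb => hb Set.right_mem_uIcc

lemma OC_mono {a : α} {S T : Set α} (h : S ⊆ T) : OC a S ⊆ OC a T :=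
  fun _ hb => Set.Subset.trans hb h

lemma mem_OC_trans {a b c : α} {S : Set α} (hb : b ∈ OC a S) (hc : c ∈ OC b S) :
    c ∈ OC a S :=
  (Set.uIcc_subset_uIcc_union_uIcc (b := b)).trans (Set.union_subset hb hc)

lemma mem_OC_symm {a b : α} {S : Set α} (hb : b ∈ OC a S) : a ∈ OC b S := by
  rwa [OC, Set.mem_setOf_eq, Set.uIcc_comm]

lemma OC_eq_of_mem {a b : α} {S : Set α} (hb : b ∈ OC a S) : OC b S = OC a S := by
  ext c
  exact ⟨fun hc => mem_OC_trans hb hc, fun hc => mem_OC_trans (mem_OC_symm hb) hc⟩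

lemma mem_OC_of_mem_uIcc {a b c : α} {S : Set α} (hb : b ∈ OC a S) (hc : c ∈ Set.uIcc a b) :
    c ∈ OC a S :=
  Set.uIcc_subset_uIcc Set.left_mem_uIcc hc |>.trans hb

lemma ordConnected_OC (a : α) (S : Set α) : (OC a S).OrdConnected := by
  constructor
  intro x hx y hy z hz
  have hxy : y ∈ OC x S := mem_OC_trans (mem_OC_symm hx) hy
  have : z ∈ OC x S := mem_OC_of_mem_uIcc hxy (Set.Icc_subset_uIcc hz)
  exact mem_OC_trans hx this

end OC

/-! ### convex open neighborhoods -/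

section Top
variable [LinearOrder α] [TopologicalSpace α] [OrderTopology α]

lemma exists_ordConnected_open {s : Set α} {a : α} (hs : s ∈ 𝓝 a) :
    ∃ t : Set α, IsOpen t ∧ t.OrdConnected ∧ a ∈ t ∧ t ⊆ s := by
  by_cases hl : ∃ l, l < a
  · by_cases hu : ∃ u, a < u
    · obtain ⟨l, u, hau, hsub⟩ := (mem_nhds_iff_exists_Ioo_subset' hl hu).1 hs
      exact ⟨Ioo l u, isOpen_Ioo, Set.ordConnected_Ioo, hau, hsub⟩
    · obtain ⟨l, hla, hsub⟩ := exists_Ioc_subset_of_mem_nhds hs hl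
      refine ⟨Ioi l, isOpen_Ioi, Set.ordConnected_Ioi, hla, fun z hz => ?_⟩
      exact hsub ⟨hz, not_lt.1 fun h => hu ⟨z, h⟩⟩
  · by_cases hu : ∃ u, a < u
    · obtain ⟨u, hau, hsub⟩ := exists_Ico_subset_of_mem_nhds hs hu
      refine ⟨Iio u, isOpen_Iio, Set.ordConnected_Iio, hau, fun z hz => ?_⟩
      exact hsub ⟨not_lt.1 fun h => hl ⟨z, h⟩, hz⟩
    · refine ⟨univ, isOpen_univ, Set.ordConnected_univ, trivial, fun z _ => ?_⟩
      have hza : z = a :=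
        le_antisymm (not_lt.1 fun h => hu ⟨z, h⟩) (not_lt.1 fun h => hl ⟨z, h⟩)
      exact hza ▸ mem_of_mem_nhds hs

lemma OC_mem_nhds {a : α} {S : Set α} (hS : S ∈ 𝓝 a) : OC a S ∈ 𝓝 a := by
  obtain ⟨t, hto, htc, hat, hts⟩ := exists_ordConnected_open hS
  refine Filter.mem_of_superset (hto.mem_nhds hat) fun z hz => ?_
  exact (htc.uIcc_subset hat hz).trans hts

lemma isOpen_OC {a : α} {S : Set α} (hS : IsOpen S) : IsOpen (OC a S) := by
  rw [isOpen_iff_mem_nhds]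
  intro b hb
  obtain ⟨t, hto, htc, hbt, hts⟩ := exists_ordConnected_open (hS.mem_nhds (OC_subset hb))
  refine Filter.mem_of_superset (hto.mem_nhds hbt) fun z hz => ?_
  exact mem_OC_trans hb ((htc.uIcc_subset hbt hz).trans hts)

lemma isClosed_OC {a : α} {S : Set α} (hS : IsClosed S) (ha : a ∈ S) :
    IsClosed (OC a S) := by
  rw [← closure_subset_iff_isClosed]
  intro z hz
  intro w hw
  rcases Set.mem_uIcc.1 hw with ⟨haw, hwz⟩ | ⟨hzw, hwa⟩
  · rcases eq_or_lt_of_le hwz with rfl | hwz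
    · exact hS.closure_subset_iff.2 OC_subset hz
    · obtain ⟨c, hc, hcOC⟩ :=
        mem_closure_iff.1 hz (Ioi w) isOpen_Ioi hwz
      exact hcOC (Set.mem_uIcc.2 (Or.inl ⟨haw, le_of_lt hc⟩))
  · rcases eq_or_lt_of_le hzw with h | hzw
    · exact h ▸ hS.closure_subset_iff.2 OC_subset hz
    · obtain ⟨c, hc, hcOC⟩ :=
        mem_closure_iff.1 hz (Iio w) isOpen_Iio hzw
      exact hcOC (Set.mem_uIcc.2 (Or.inr ⟨le_of_lt hc, hwa⟩))

end Top

/-! ### small image -/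

section Fsh
variable [TopologicalSpace α] [TopologicalSpace β]

/-- The "small image" of a set. -/
def fsh (f : α → β) (U : Set α) : Set β := (f '' Uᶜ)ᶜ

lemma mem_fsh {f : α → β} {U : Set α} {x : β} : x ∈ fsh f U ↔ f ⁻¹' {x} ⊆ U := by
  constructor
  · intro h k hk
    by_contra hkU
    exact h ⟨k, hkU, hk⟩
  · rintro h ⟨k, hkU, rfl⟩
    exact hkU (h rfl)

lemma isOpen_fsh {f : α → β} (hf : IsClosedMap f) {U : Set α} (hU : IsOpen U) :
    IsOpen (fsh f U) :=
  (hf _ hU.isClosed_compl).isOpen_compl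

lemma fsh_nonempty {f : α → β}
    (hirr : ∀ A : Set α, IsClosed A → A ≠ univ → f '' A ≠ univ)
    {U : Set α} (hU : IsOpen U) (hne : U.Nonempty) : (fsh f U).Nonempty := by
  have h := hirr Uᶜ hU.isClosed_compl (fun h => hne.ne_empty (by
    rw [← compl_compl U, h, Set.compl_univ]))
  rcases Set.ne_univ_iff_exists_notMem _ |>.1 h with ⟨x, hx⟩
  exact ⟨x, hx⟩

lemma fsh_disjoint {f : α → β} (hs : Surjective f) {U V : Set α} (h : Disjoint U V) :
    Disjoint (fsh f U) (fsh f V) := by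
  rw [Set.disjoint_left]
  intro x hxU hxV
  obtain ⟨k, rfl⟩ := hs x
  exact (Set.disjoint_left.1 h) (mem_fsh.1 hxU rfl) (mem_fsh.1 hxV rfl)

lemma fsh_mono {f : α → β} {U V : Set α} (h : U ⊆ V) : fsh f U ⊆ fsh f V :=
  fun _ hx => mem_fsh.2 ((mem_fsh.1 hx).trans h)

end Fsh

/-- A compact topology that refines a T2 topology equals it. -/
lemma topology_eq_of_le_of_compact {t₁ t₂ : TopologicalSpace β} (h : t₁ ≤ t₂)
    (hc : @CompactSpace β t₁) (h2 : @T2Space β t₂) : t₁ = t₂ := by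
  refine le_antisymm h ?_
  intro U hU
  have hUc : @IsClosed β t₁ Uᶜ := by
    rw [@isClosed_compl_iff]; exact hU
  have hcpt : @IsCompact β t₁ Uᶜ := @IsClosed.isCompact β t₁ _ hc hUc
  have hcpt2 : @IsCompact β t₂ Uᶜ := by
    have : Uᶜ = (id '' Uᶜ) := by simp
    rw [this]
    exact @IsCompact.image β β t₁ t₂ _ _ hcpt (continuous_id_of_le h)
  have : @IsClosed β t₂ Uᶜ := by
    letI := t₂
    exact hcpt2.isClosed
  rwa [@isClosed_compl_iff] at this


/-! ### cardinal invariant basics -/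

section Card
variable {Y : Type u} [TopologicalSpace Y]

lemma cellularity_set_bddAbove (Y : Type u) [TopologicalSpace Y] :
    BddAbove { c | ∃ 𝒰 : Set (Set Y), Cardinal.mk 𝒰 = c ∧ (∀ U ∈ 𝒰, IsOpen U ∧ U.Nonempty) ∧
      𝒰.PairwiseDisjoint id } := by
  refine ⟨Cardinal.mk (Set Y), ?_⟩
  rintro c ⟨𝒰, rfl, -, -⟩
  exact Cardinal.mk_set_le 𝒰

lemma le_cellularity {𝒰 : Set (Set Y)} (h1 : ∀ U ∈ 𝒰, IsOpen U ∧ U.Nonempty)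
    (h2 : 𝒰.PairwiseDisjoint id) : Cardinal.mk 𝒰 ≤ cellularity Y :=
  le_csSup (cellularity_set_bddAbove Y) ⟨𝒰, rfl, h1, h2⟩

lemma cellularity_le {c : Cardinal.{u}}
    (h : ∀ 𝒰 : Set (Set Y), (∀ U ∈ 𝒰, IsOpen U ∧ U.Nonempty) → 𝒰.PairwiseDisjoint id →
      Cardinal.mk 𝒰 ≤ c) : cellularity Y ≤ c := by
  refine csSup_le ⟨0, ∅, by simp, by simp, by simp⟩ ?_
  rintro d ⟨𝒰, rfl, h1, h2⟩
  exact h 𝒰 h1 h2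

lemma density_le {c : Cardinal.{u}} {D : Set Y} (hD : Dense D) (hc : Cardinal.mk D ≤ c) :
    density Y ≤ c :=
  le_trans (csInf_le' ⟨D, rfl, hD⟩) hc

lemma weight_le {c : Cardinal.{u}} {B : Set (Set Y)} (hB : IsTopologicalBasis B)
    (hc : Cardinal.mk B ≤ c) : weight Y ≤ c :=
  le_trans (csInf_le' ⟨B, rfl, hB⟩) hc

lemma exists_weight_basis (Y : Type u) [TopologicalSpace Y] :
    ∃ B : Set (Set Y), Cardinal.mk B = weight Y ∧ IsTopologicalBasis B := by
  have hne : { c | ∃ B : Set (Set Y), Cardinal.mk B = c ∧ IsTopologicalBasis B }.Nonempty :=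
    ⟨_, { U : Set Y | IsOpen U }, rfl, isTopologicalBasis_opens⟩
  obtain ⟨B, h1, h2⟩ := csInf_mem hne
  exact ⟨B, h1, h2⟩

lemma exists_density_dense (Y : Type u) [TopologicalSpace Y] :
    ∃ D : Set Y, Cardinal.mk D = density Y ∧ Dense D := by
  have hne : { c | ∃ D : Set Y, Cardinal.mk D = c ∧ Dense D }.Nonempty :=
    ⟨_, univ, rfl, dense_univ⟩
  obtain ⟨D, h1, h2⟩ := csInf_mem hne
  exact ⟨D, h1, h2⟩

lemma density_le_weight (Y : Type u) [TopologicalSpace Y] : density Y ≤ weight Y := by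
  obtain ⟨B, hBcard, hB⟩ := exists_weight_basis Y
  classical
  have hch : ∀ u : {U : ↥B // U.val.Nonempty}, ∃ y : Y, y ∈ u.val.val := fun u => u.2
  choose p hp using hch
  refine density_le (D := range p) ?_ (le_trans Cardinal.mk_range_le ?_)
  · rw [dense_iff_inter_open]
    intro U hU hUne
    obtain ⟨x, hx⟩ := hUne
    obtain ⟨b, hbB, hxb, hbU⟩ := hB.exists_subset_of_mem_open hx hU
    refine ⟨p ⟨⟨b, hbB⟩, ⟨x, hxb⟩⟩, hbU ?_, mem_range_self _⟩
    exact hp ⟨⟨b, hbB⟩, ⟨x, hxb⟩⟩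
  · exact le_trans (Cardinal.mk_subtype_le _) (le_of_eq hBcard)

lemma cellularity_le_weight (Y : Type u) [TopologicalSpace Y] :
    cellularity Y ≤ weight Y := by
  obtain ⟨B, hBcard, hB⟩ := exists_weight_basis Y
  refine cellularity_le fun 𝒰 h1 h2 => ?_
  classical
  have hch : ∀ u : ↥𝒰, ∃ b : ↥B, b.val ⊆ u.val ∧ b.val.Nonempty := by
    rintro ⟨U, hU⟩
    obtain ⟨x, hx⟩ := (h1 U hU).2
    obtain ⟨b, hbB, hxb, hbU⟩ := hB.exists_subset_of_mem_open hx (h1 U hU).1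
    exact ⟨⟨b, hbB⟩, hbU, ⟨x, hxb⟩⟩
  choose m hm1 hm2 using hch
  have hinj : Function.Injective m := by
    intro u v huv
    ext1
    by_contra hne
    have hdisj := h2 u.2 v.2 (by simpa [Subtype.ext_iff] using hne)
    obtain ⟨x, hx⟩ := hm2 u
    exact (Set.disjoint_left.1 hdisj) (hm1 u hx) (by rw [huv] at hx; exact hm1 v hx)
  calc Cardinal.mk 𝒰 ≤ Cardinal.mk B := Cardinal.mk_le_of_injective hinj
    _ = weight Y := hBcard

lemma basis_infinite {Y : Type*} [TopologicalSpace Y] [T1Space Y] [CompactSpace Y] [Infinite Y]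
    {B : Set (Set Y)} (hB : IsTopologicalBasis B) : B.Infinite := by
  intro hfin
  have hdisc : DiscreteTopology Y := by
    rw [discreteTopology_iff_isOpen_singleton]
    intro x
    have hUopen : IsOpen (⋂₀ {b ∈ B | x ∈ b}) :=
      Set.Finite.isOpen_sInter (hfin.subset (sep_subset _ _)) (fun s hs => hB.isOpen hs.1)
    have hxU : x ∈ ⋂₀ {b ∈ B | x ∈ b} := fun s hs => hs.2
    have hsub : ∀ O : Set Y, IsOpen O → x ∈ O → ⋂₀ {b ∈ B | x ∈ b} ⊆ O := by
      intro O hO hxO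
      obtain ⟨b, hbB, hxb, hbO⟩ := hB.exists_subset_of_mem_open hxO hO
      exact fun z hz => hbO (hz b ⟨hbB, hxb⟩)
    have heq : ⋂₀ {b ∈ B | x ∈ b} = {x} := by
      apply Subset.antisymm
      · intro z hz
        by_contra hzx
        exact (hsub {z}ᶜ isOpen_compl_singleton (by simpa using fun h => hzx h.symm)) hz rfl
      · intro z hz
        rw [Set.mem_singleton_iff] at hz
        exact hz ▸ hxU
    rw [← heq]
    exact hUopen
  haveI := finite_of_compact_of_discrete (X := Y)
  exact not_finite Y

end Card


/-! ### cellularity and density under irreducible closed surjections -/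

section Irr
variable {K X : Type u} [TopologicalSpace K] [TopologicalSpace X]

lemma cellularity_eq_of_irr {f : K → X} (hf : Continuous f) (hsurj : Surjective f)
    (hcl : IsClosedMap f)
    (hirr : ∀ A : Set K, IsClosed A → A ≠ univ → f '' A ≠ univ) :
    cellularity K = cellularity X := by
  apply le_antisymm
  · refine cellularity_le fun 𝒰 h1 h2 => ?_
    have hinj : Set.InjOn (fsh f) 𝒰 := by
      intro U hU V hV hUV
      by_contra hne
      have hdisj : Disjoint U V := h2 hU hV hne
      obtain ⟨x, hx⟩ := fsh_nonempty hirr (h1 U hU).1 (h1 U hU).2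
      have hx' : x ∈ fsh f V := hUV ▸ hx
      exact Set.disjoint_left.1 (fsh_disjoint hsurj hdisj) hx hx'
    have hcard : Cardinal.mk 𝒰 = Cardinal.mk (fsh f '' 𝒰) :=
      (Cardinal.mk_image_eq_of_injOn _ _ hinj).symm
    rw [hcard]
    refine le_cellularity ?_ ?_
    · rintro V ⟨U, hU, rfl⟩
      exact ⟨isOpen_fsh hcl (h1 U hU).1, fsh_nonempty hirr (h1 U hU).1 (h1 U hU).2⟩
    · rintro V ⟨U, hU, rfl⟩ W ⟨U', hU', rfl⟩ hne
      have : U ≠ U' := fun h => hne (by rw [h])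
      exact fsh_disjoint hsurj (h2 hU hU' this)
  · refine cellularity_le fun 𝒰 h1 h2 => ?_
    have hinj : Set.InjOn (fun U => f ⁻¹' U) 𝒰 := (hsurj.preimage_injective).injOn
    have hcard : Cardinal.mk 𝒰 = Cardinal.mk ((fun U => f ⁻¹' U) '' 𝒰) :=
      (Cardinal.mk_image_eq_of_injOn _ _ hinj).symm
    rw [hcard]
    refine le_cellularity ?_ ?_
    · rintro V ⟨U, hU, rfl⟩
      refine ⟨(h1 U hU).1.preimage hf, ?_⟩
      obtain ⟨x, hx⟩ := (h1 U hU).2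
      obtain ⟨k, rfl⟩ := hsurj x
      exact ⟨k, hx⟩
    · rintro V ⟨U, hU, rfl⟩ W ⟨U', hU', rfl⟩ hne
      have : U ≠ U' := fun h => hne (by rw [h])
      exact Disjoint.preimage f (h2 hU hU' this)

lemma density_eq_of_irr {f : K → X} (hf : Continuous f) (hsurj : Surjective f)
    (hcl : IsClosedMap f)
    (hirr : ∀ A : Set K, IsClosed A → A ≠ univ → f '' A ≠ univ) :
    density K = density X := by
  apply le_antisymm
  · obtain ⟨D, hDcard, hD⟩ := exists_density_dense X
    classical
    have hch : ∀ d : ↥D, ∃ k : K, f k = d.val := fun d => hsurj d.val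
    choose e he using hch
    have hdense : Dense (range e) := by
      have himg : D ⊆ f '' closure (range e) := by
        intro d hd
        exact ⟨e ⟨d, hd⟩, subset_closure (mem_range_self _), he ⟨d, hd⟩⟩
      have hclosed : IsClosed (f '' closure (range e)) := hcl _ isClosed_closure
      have huniv : f '' closure (range e) = univ := by
        apply Subset.antisymm (subset_univ _)
        rw [← hclosed.closure_eq]
        intro z _
        exact closure_mono himg (hD z)
      have := hirr (closure (range e)) isClosed_closure
      by_contra hnd
      rw [Dense] at hnd
      push_neg at hnd
      obtain ⟨z, hz⟩ := hnd
      exact (this (fun h => hz (h ▸ trivial)) huniv)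
    exact density_le hdense (le_trans Cardinal.mk_range_le (le_of_eq hDcard))
  · obtain ⟨D, hDcard, hD⟩ := exists_density_dense K
    have hdense : Dense (f '' D) := by
      rw [dense_iff_closure_eq]
      apply Subset.antisymm (subset_univ _)
      calc univ = f '' univ := by rw [image_univ, Set.range_eq_univ.2 hsurj]
        _ = f '' closure D := by rw [hD.closure_eq]
        _ ⊆ closure (f '' D) := image_closure_subset_closure_image hf
    exact density_le hdense (le_trans Cardinal.mk_image_le (le_of_eq hDcard))

end Irr


/-! ### character -/

section Chi
variable {K X : Type u} [LinearOrder K] [TopologicalSpace K] [OrderTopology K] [CompactSpace K]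
  [TopologicalSpace X] [T2Space X] [CompactSpace X]

lemma chi_side {f : K → X} (hf : Continuous f)
    (hlight : ∀ a b : K, Set.uIcc a b ⊆ f ⁻¹' {f a} → b = a)
    {x : X} {B : Set (Set X)} (hB1 : ∀ V ∈ B, V ∈ 𝓝 x) (hB2 : ∀ N ∈ 𝓝 x, ∃ V ∈ B, V ⊆ N)
    {k : K} (hk : f k = x) {W : Set K} (hWo : IsOpen W) (hkW : k ∈ W)
    (H : ∀ V ∈ B, ∃ z, z < k ∧ z ∉ W ∧ Icc z k ⊆ f ⁻¹' V) : False := by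
  classical
  have hm : ∀ V : ↥B, ∃ m : K, m < k ∧ m ∉ W ∧ m ∈ f ⁻¹' (closure V.val) ∧
      Ioc m k ⊆ f ⁻¹' V.val := by
    rintro ⟨V, hV⟩
    set T : Set K := {z | z < k ∧ z ∉ W ∧ Icc z k ⊆ f ⁻¹' V} with hT
    obtain ⟨z₀, hz₀⟩ := H V hV
    have hTne : T.Nonempty := ⟨z₀, hz₀⟩
    obtain ⟨m, hmmem, hmub⟩ := (isClosed_closure.isCompact).exists_isGreatest hTne.closure
    have hmW : m ∉ W :=
      closure_minimal (fun z hz => hz.2.1) hWo.isClosed_compl hmmem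
    have hmk : m ≤ k :=
      closure_minimal (fun z (hz : z ∈ T) => le_of_lt hz.1) isClosed_Iic hmmem
    refine ⟨m, lt_of_le_of_ne hmk (fun h => hmW (h ▸ hkW)), hmW, ?_, ?_⟩
    · have h1 : T ⊆ f ⁻¹' closure V := fun z hz =>
        subset_closure (hz.2.2 ⟨le_rfl, le_of_lt hz.1⟩)
      exact closure_minimal h1 (isClosed_closure.preimage hf) hmmem
    · intro w hw
      obtain ⟨z, hz⟩ := hTne
      have hzm : z ≤ m := hmub (subset_closure hz)
      exact hz.2.2 ⟨le_of_lt (lt_of_le_of_lt hzm hw.1), hw.2⟩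
  choose m hm1 hm2 hm3 hm4 using hm
  have hBne : B.Nonempty := by
    obtain ⟨V, hV, -⟩ := hB2 univ Filter.univ_mem
    exact ⟨V, hV⟩
  haveI := hBne.to_subtype
  have hMne : (range m).Nonempty := range_nonempty _
  obtain ⟨μ, hμmem, hμub⟩ := (isClosed_closure.isCompact).exists_isGreatest hMne.closure
  have hμk : μ ≤ k :=
    closure_minimal (by rintro z ⟨V, rfl⟩; exact le_of_lt (hm1 V)) isClosed_Iic hμmem
  have hμW : μ ∉ W :=
    closure_minimal (by rintro z ⟨V, rfl⟩; exact hm2 V) hWo.isClosed_compl hμmem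
  have hμk' : μ < k := lt_of_le_of_ne hμk (fun h => hμW (h ▸ hkW))
  have hmle : ∀ V : ↥B, m V ≤ μ := fun V => hμub (subset_closure (mem_range_self V))
  have hμx : f μ = x := by
    have hcl : ∀ V : ↥B, f μ ∈ closure V.val := by
      intro V
      rcases lt_or_eq_of_le (hmle V) with h | h
      · exact subset_closure (hm4 V ⟨h, hμk⟩)
      · exact (h ▸ hm3 V :)
    by_contra hne
    have hmem : ({f μ}ᶜ : Set X) ∈ 𝓝 x :=
      isOpen_compl_singleton.mem_nhds (by simpa using Ne.symm hne)
    obtain ⟨C, ⟨hCnb, hCcl⟩, hCsub⟩ := (closed_nhds_basis x).mem_iff.1 hmem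
    obtain ⟨V, hV, hVC⟩ := hB2 C hCnb
    exact hCsub (hCcl.closure_subset_iff.2 hVC (hcl ⟨V, hV⟩)) rfl
  have hIcc : Set.Icc μ k ⊆ f ⁻¹' {x} := by
    intro w hw
    rcases eq_or_lt_of_le hw.1 with rfl | hμw
    · exact hμx
    · have hwV : ∀ V : ↥B, w ∈ f ⁻¹' V.val :=
        fun V => hm4 V ⟨lt_of_le_of_lt (hmle V) hμw, hw.2⟩
      by_contra hne
      have hmem : ({f w}ᶜ : Set X) ∈ 𝓝 x :=
        isOpen_compl_singleton.mem_nhds (by simpa using fun h => hne (by simp [h]))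
      obtain ⟨V, hV, hVsub⟩ := hB2 _ hmem
      exact hVsub (hwV ⟨V, hV⟩) rfl
  have := hlight μ k (by rwa [Set.uIcc_of_le (le_of_lt hμk'), hμx])
  exact absurd this (ne_of_gt hμk')

lemma chi_side' {f : K → X} (hf : Continuous f)
    (hlight : ∀ a b : K, Set.uIcc a b ⊆ f ⁻¹' {f a} → b = a)
    {x : X} {B : Set (Set X)} (hB1 : ∀ V ∈ B, V ∈ 𝓝 x) (hB2 : ∀ N ∈ 𝓝 x, ∃ V ∈ B, V ⊆ N)
    {k : K} (hk : f k = x) {W : Set K} (hWo : IsOpen W) (hkW : k ∈ W)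
    (H : ∀ V ∈ B, ∃ z, k < z ∧ z ∉ W ∧ Icc k z ⊆ f ⁻¹' V) : False := by
  haveI : CompactSpace Kᵒᵈ := ‹CompactSpace K›
  refine chi_side (K := Kᵒᵈ) (f := fun a => f (OrderDual.ofDual a)) (x := x)
      (B := B) (k := OrderDual.toDual k) (W := OrderDual.ofDual ⁻¹' W)
      hf ?_ hB1 hB2 hk hWo hkW ?_
  · intro a b hab
    have h2 : Set.uIcc (OrderDual.ofDual a) (OrderDual.ofDual b) ⊆
        f ⁻¹' {f (OrderDual.ofDual a)} := by
      intro z hz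
      refine hab ?_
      rw [show a = OrderDual.toDual (OrderDual.ofDual a) from rfl,
          show b = OrderDual.toDual (OrderDual.ofDual b) from rfl, Set.uIcc_toDual]
      exact hz
    exact congrArg OrderDual.toDual (hlight _ _ h2)
  · intro V hV
    obtain ⟨z, h1, h2, h3⟩ := H V hV
    refine ⟨OrderDual.toDual z, h1, h2, ?_⟩
    intro w hw
    exact h3 ⟨hw.2, hw.1⟩

end Chi


section Chi2
variable {K X : Type u} [LinearOrder K] [TopologicalSpace K] [OrderTopology K] [CompactSpace K]
  [TopologicalSpace X] [T2Space X] [CompactSpace X]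

lemma nhdsChar_le_of_light {f : K → X} (hf : Continuous f)
    (hlight : ∀ a b : K, Set.uIcc a b ⊆ f ⁻¹' {f a} → b = a) (k : K) :
    nhdsChar K k ≤ nhdsChar X (f k) := by
  set x := f k with hxk
  have hne : {c | ∃ B : Set (Set X), Cardinal.mk B = c ∧ (∀ U ∈ B, U ∈ 𝓝 x) ∧
      ∀ V ∈ 𝓝 x, ∃ U ∈ B, U ⊆ V}.Nonempty :=
    ⟨_, {V | V ∈ 𝓝 x}, rfl, fun U hU => hU, fun V hV => ⟨V, hV, subset_rfl⟩⟩
  refine le_csInf hne ?_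
  rintro c ⟨B, rfl, hB1, hB2⟩
  have hnb : ∀ N ∈ (fun V => OC k (f ⁻¹' V)) '' B, N ∈ 𝓝 k := by
    rintro N ⟨V, hV, rfl⟩
    exact OC_mem_nhds (hf.continuousAt.preimage_mem_nhds (hB1 V hV))
  have hbase : ∀ N ∈ 𝓝 k, ∃ U ∈ (fun V => OC k (f ⁻¹' V)) '' B, U ⊆ N := by
    intro N hN
    obtain ⟨W, hWo, hWc, hkW, hWN⟩ := exists_ordConnected_open hN
    by_contra hcon
    push_neg at hcon
    have hesc : ∀ V ∈ B, ∃ z ∈ OC k (f ⁻¹' V), z ∉ W := by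
      intro V hV
      have h1 := hcon (OC k (f ⁻¹' V)) ⟨V, hV, rfl⟩
      by_contra h2
      push_neg at h2
      exact h1 (fun z hz => hWN (h2 z hz))
    by_cases hL : ∃ VL ∈ B, ∀ z ∈ OC k (f ⁻¹' VL), z < k → z ∈ W
    · by_cases hR : ∃ VR ∈ B, ∀ z ∈ OC k (f ⁻¹' VR), k < z → z ∈ W
      · obtain ⟨VL, hVL, hVLp⟩ := hL
        obtain ⟨VR, hVR, hVRp⟩ := hR
        obtain ⟨V, hV, hVsub⟩ := hB2 (VL ∩ VR)
          (Filter.inter_mem (hB1 _ hVL) (hB1 _ hVR))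
        obtain ⟨z, hzOC, hzW⟩ := hesc V hV
        have hzL : z ∈ OC k (f ⁻¹' VL) :=
          OC_mono (preimage_mono (hVsub.trans inter_subset_left)) hzOC
        have hzR : z ∈ OC k (f ⁻¹' VR) :=
          OC_mono (preimage_mono (hVsub.trans inter_subset_right)) hzOC
        rcases lt_trichotomy z k with h | rfl | h
        · exact hzW (hVLp z hzL h)
        · exact hzW hkW
        · exact hzW (hVRp z hzR h)
      · push_neg at hR
        refine chi_side' hf hlight hB1 hB2 hxk.symm hWo hkW ?_
        intro V hV
        obtain ⟨z, hzOC, hzk, hzW⟩ := hR V hV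
        refine ⟨z, hzk, hzW, ?_⟩
        have : Set.uIcc k z ⊆ f ⁻¹' V := hzOC
        rwa [Set.uIcc_of_le (le_of_lt hzk)] at this
    · push_neg at hL
      refine chi_side hf hlight hB1 hB2 hxk.symm hWo hkW ?_
      intro V hV
      obtain ⟨z, hzOC, hzk, hzW⟩ := hL V hV
      refine ⟨z, hzk, hzW, ?_⟩
      have : Set.uIcc k z ⊆ f ⁻¹' V := hzOC
      rwa [Set.uIcc_comm, Set.uIcc_of_le (le_of_lt hzk)] at this
  calc nhdsChar K k ≤ Cardinal.mk ((fun V => OC k (f ⁻¹' V)) '' B) :=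
        csInf_le' ⟨_, rfl, hnb, hbase⟩
    _ ≤ Cardinal.mk B := Cardinal.mk_image_le

end Chi2


/-! ### weight of the image -/

section Weight1
variable {K X : Type u} [TopologicalSpace K] [TopologicalSpace X]

lemma weight_image_le [CompactSpace K] [T1Space K] [Infinite K] [T2Space X]
    {f : K → X} (hf : Continuous f) (hsurj : Surjective f) :
    weight X ≤ weight K := by
  classical
  obtain ⟨B, hBcard, hB⟩ := exists_weight_basis K
  have hBinf : B.Infinite := basis_infinite hB
  haveI := hBinf.to_subtype
  have hclosed : IsClosedMap f := hf.isClosedMap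
  set Φ : Finset ↥B → Set X := fun F => fsh f (⋃ b ∈ F, (b : Set K)) with hΦ
  have hbasis : IsTopologicalBasis (range Φ) := by
    refine isTopologicalBasis_of_isOpen_of_nhds ?_ ?_
    · rintro U ⟨F, rfl⟩
      exact isOpen_fsh hclosed (isOpen_biUnion fun b _ => hB.isOpen b.2)
    · intro a u hau hu
      have hfib : IsCompact (f ⁻¹' {a}) := (isClosed_singleton.preimage hf).isCompact
      have hO : IsOpen (f ⁻¹' u) := hu.preimage hf
      have hsubO : f ⁻¹' {a} ⊆ f ⁻¹' u := by
        intro z hz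
        simp only [mem_preimage, mem_singleton_iff] at hz
        simpa [hz] using hau
      have hcov : f ⁻¹' {a} ⊆ ⋃ i : {b : ↥B // (b : Set K) ⊆ f ⁻¹' u}, (i.1 : Set K) := by
        intro z hz
        obtain ⟨b, hbB, hzb, hbO⟩ := hB.exists_subset_of_mem_open (hsubO hz) hO
        exact mem_iUnion.2 ⟨⟨⟨b, hbB⟩, hbO⟩, hzb⟩
      obtain ⟨F, hF⟩ := hfib.elim_finite_subcover _ (fun i => hB.isOpen i.1.2) hcov
      set F' : Finset ↥B := F.image Subtype.val with hF'
      refine ⟨Φ F', mem_range_self _, ?_, ?_⟩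
      · rw [hΦ]
        refine mem_fsh.2 ?_
        intro z hz
        obtain ⟨i, hiF, hzi⟩ := by
          simpa only [mem_iUnion, exists_prop] using hF hz
        exact mem_biUnion (Finset.mem_image_of_mem _ hiF) hzi
      · intro y hy
        have hfy : f ⁻¹' {y} ⊆ f ⁻¹' u := by
          refine (mem_fsh.1 hy).trans ?_
          intro z hz
          obtain ⟨b, hbF', hzb⟩ := by
            simpa only [mem_iUnion, exists_prop] using hz
          obtain ⟨i, hiF, rfl⟩ := Finset.mem_image.1 hbF'
          exact i.2 hzb
        obtain ⟨z, hz⟩ := hsurj y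
        have : z ∈ f ⁻¹' u := hfy (by simp [hz])
        simpa [hz] using this
  refine weight_le hbasis ?_
  calc Cardinal.mk (range Φ) ≤ Cardinal.mk (Finset ↥B) := Cardinal.mk_range_le
    _ = Cardinal.mk ↥B := Cardinal.mk_finset_of_infinite _
    _ = weight K := hBcard

end Weight1


/-! ### weight of the domain -/

section Weight2
variable {K X : Type u} [LinearOrder K] [TopologicalSpace K] [OrderTopology K] [CompactSpace K]
  [TopologicalSpace X] [T2Space X] [CompactSpace X]

lemma weight_le_weight_image [Infinite X] {f : K → X} (hf : Continuous f)
    (hsurj : Surjective f)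
    (hlight : ∀ a b : K, Set.uIcc a b ⊆ f ⁻¹' {f a} → b = a)
    (hcell : cellularity K ≤ weight X) (hdens : density K ≤ weight X) :
    weight K ≤ weight X := by
  classical
  set κ := weight X with hκdef
  obtain ⟨B, hBcard, hB⟩ := exists_weight_basis X
  have hBinf : B.Infinite := basis_infinite hB
  haveI := hBinf.to_subtype
  have hκ : Cardinal.aleph0 ≤ κ := by
    rw [hκdef, ← hBcard]
    exact Cardinal.aleph0_le_mk ↥B
  -- the set of jumps
  set J : Set (K × K) := {p | p.1 < p.2 ∧ Ioo p.1 p.2 = ∅} with hJdef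
  have hfne : ∀ p : K × K, p ∈ J → f p.1 ≠ f p.2 := by
    rintro ⟨a, b⟩ ⟨hlt, hIoo⟩ heq
    have hsub : Set.uIcc a b ⊆ f ⁻¹' {f a} := by
      rw [Set.uIcc_of_le (le_of_lt hlt)]
      intro z hz
      rcases eq_or_lt_of_le hz.1 with rfl | h1
      · exact rfl
      rcases eq_or_lt_of_le hz.2 with rfl | h2
      · simp [mem_preimage, ← heq]
      · exact absurd (show z ∈ Ioo a b from ⟨h1, h2⟩) (by rw [hIoo]; exact notMem_empty z)
    exact absurd (hlight a b hsub) (ne_of_gt hlt)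
  -- assign a basic set to each jump
  have hex : ∀ j : ↥J, ∃ b : ↥B, f j.1.2 ∈ b.val ∧ f j.1.1 ∉ b.val := by
    rintro ⟨⟨a, b⟩, hab⟩
    have h1 : f b ∈ ({f a}ᶜ : Set X) := by
      simpa using (hfne (a, b) hab).symm
    obtain ⟨V, hVB, hmem, hsub⟩ :=
      hB.exists_subset_of_mem_open h1 isOpen_compl_singleton
    exact ⟨⟨V, hVB⟩, hmem, fun h => hsub h rfl⟩
  choose Ub hUb2 hUb1 using hex
  -- each fiber of Ub injects into a cellular family
  have hfib : ∀ b : ↥B, Cardinal.mk {j : ↥J // Ub j = b} ≤ cellularity K := by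
    intro b
    set ψ : {j : ↥J // Ub j = b} → Set K := fun j => OC j.1.1.2 (f ⁻¹' b.val) with hψ
    have hmem2 : ∀ j : {j : ↥J // Ub j = b}, j.1.1.2 ∈ f ⁻¹' b.val := by
      intro j
      have := hUb2 j.1
      rwa [j.2] at this
    have hnotmem1 : ∀ j : {j : ↥J // Ub j = b}, j.1.1.1 ∉ f ⁻¹' b.val := by
      intro j
      have := hUb1 j.1
      rwa [j.2] at this
    have hmin : ∀ j : {j : ↥J // Ub j = b}, ∀ z ∈ ψ j, j.1.1.2 ≤ z := by
      intro j z hz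
      by_contra hzlt
      push_neg at hzlt
      have hIcc : Set.Icc z j.1.1.2 ⊆ f ⁻¹' b.val := by
        have h0 : Set.uIcc j.1.1.2 z ⊆ f ⁻¹' b.val := hz
        rwa [Set.uIcc_comm, Set.uIcc_of_le (le_of_lt hzlt)] at h0
      rcases le_or_gt z j.1.1.1 with h | h
      · exact hnotmem1 j (hIcc ⟨h, le_of_lt j.1.2.1⟩)
      · have : j.1.1.1 < j.1.1.2 ∧ Ioo j.1.1.1 j.1.1.2 = ∅ := j.1.2
        exact absurd (show z ∈ Ioo j.1.1.1 j.1.1.2 from ⟨h, hzlt⟩)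
          (by rw [this.2]; exact notMem_empty z)
    have hself : ∀ j : {j : ↥J // Ub j = b}, j.1.1.2 ∈ ψ j :=
      fun j => self_mem_OC (hmem2 j)
    have hinj : Function.Injective ψ := by
      intro j j' heq
      have h1 : j.1.1.2 ∈ ψ j' := heq ▸ hself j
      have h2 : j'.1.1.2 ∈ ψ j := heq.symm ▸ hself j'
      have h3 : j.1.1.2 = j'.1.1.2 :=
        le_antisymm (hmin j _ h2) (hmin j' _ h1)
      have h4 : j.1.1.1 = j'.1.1.1 := by
        rcases lt_trichotomy j.1.1.1 j'.1.1.1 with h | h | h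
        · exact absurd (show j'.1.1.1 ∈ Ioo j.1.1.1 j.1.1.2 from ⟨h, h3 ▸ j'.1.2.1⟩)
            (by rw [j.1.2.2]; exact notMem_empty _)
        · exact h
        · exact absurd (show j.1.1.1 ∈ Ioo j'.1.1.1 j'.1.1.2 from ⟨h, h3 ▸ j.1.2.1⟩)
            (by rw [j'.1.2.2]; exact notMem_empty _)
      exact Subtype.ext (Subtype.ext (Prod.ext h4 h3))
    have hcell' : Cardinal.mk (range ψ) ≤ cellularity K := by
      refine le_cellularity ?_ ?_
      · rintro V ⟨j, rfl⟩
        exact ⟨isOpen_OC ((hB.isOpen b.2).preimage hf), ⟨_, hself j⟩⟩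
      · rintro V ⟨j, rfl⟩ V' ⟨j', rfl⟩ hne
        show Disjoint (ψ j) (ψ j')
        rw [Set.disjoint_left]
        intro z hz hz'
        exact hne (by rw [hψ]; exact (OC_eq_of_mem hz).symm.trans (OC_eq_of_mem hz'))
    calc Cardinal.mk {j : ↥J // Ub j = b} = Cardinal.mk (range ψ) :=
          (Cardinal.mk_range_eq ψ hinj).symm
      _ ≤ cellularity K := hcell'
  have hJcard : Cardinal.mk ↥J ≤ κ := by
    have h1 : Cardinal.mk ↥J =
        Cardinal.sum (fun b : ↥B => Cardinal.mk {j : ↥J // Ub j = b}) := by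
      rw [← Cardinal.mk_sigma]
      exact (Cardinal.mk_congr (Equiv.sigmaFiberEquiv Ub)).symm
    calc Cardinal.mk ↥J
        = Cardinal.sum (fun b : ↥B => Cardinal.mk {j : ↥J // Ub j = b}) := h1
      _ ≤ Cardinal.sum (fun _ : ↥B => κ) :=
          Cardinal.sum_le_sum _ _ (fun b => (hfib b).trans hcell)
      _ = Cardinal.mk ↥B * κ := Cardinal.sum_const' _ _
      _ = κ * κ := by rw [hBcard]
      _ = κ := Cardinal.mul_eq_self hκ
  -- the endpoint set
  obtain ⟨D, hDcard, hD⟩ := exists_density_dense K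
  set E : Set K := D ∪ (Prod.fst '' J) ∪ (Prod.snd '' J) with hEdef
  have hEcard : Cardinal.mk ↥E ≤ κ := by
    have h1 : Cardinal.mk ↥(Prod.fst '' J) ≤ κ := Cardinal.mk_image_le.trans hJcard
    have h2 : Cardinal.mk ↥(Prod.snd '' J) ≤ κ := Cardinal.mk_image_le.trans hJcard
    have h3 : Cardinal.mk ↥D ≤ κ := hDcard ▸ hdens
    calc Cardinal.mk ↥E ≤ Cardinal.mk ↥(D ∪ (Prod.fst '' J) : Set K) +
          Cardinal.mk ↥(Prod.snd '' J) := Cardinal.mk_union_le _ _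
      _ ≤ κ := Cardinal.add_le_of_le hκ
          ((Cardinal.mk_union_le _ _).trans (Cardinal.add_le_of_le hκ h3 h1)) h2
  -- endpoint shrinking
  have hshrL : ∀ c a : K, c < a → ∃ c' ∈ E, c ≤ c' ∧ c' < a := by
    intro c a hca
    rcases eq_empty_or_nonempty (Ioo c a) with hemp | hne
    · exact ⟨c, Or.inl (Or.inr ⟨(c, a), ⟨hca, hemp⟩, rfl⟩), le_rfl, hca⟩
    · obtain ⟨d, hdI, hdD⟩ := dense_iff_inter_open.1 hD _ isOpen_Ioo hne
      exact ⟨d, Or.inl (Or.inl hdD), le_of_lt hdI.1, hdI.2⟩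
  have hshrR : ∀ a u : K, a < u → ∃ u' ∈ E, u' ≤ u ∧ a < u' := by
    intro a u hau
    rcases eq_empty_or_nonempty (Ioo a u) with hemp | hne
    · exact ⟨u, Or.inr ⟨(a, u), ⟨hau, hemp⟩, rfl⟩, le_rfl, hau⟩
    · obtain ⟨d, hdI, hdD⟩ := dense_iff_inter_open.1 hD _ isOpen_Ioo hne
      exact ⟨d, Or.inl (Or.inl hdD), le_of_lt hdI.2, hdI.1⟩
  -- the basis
  set S : Set (Set K) := ((fun p : K × K => Ioo p.1 p.2) '' (E ×ˢ E)) ∪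
      ((fun e => Iio e) '' E) ∪ ((fun e => Ioi e) '' E) ∪ {univ} with hSdef
  have hSbasis : IsTopologicalBasis S := by
    refine isTopologicalBasis_of_isOpen_of_nhds ?_ ?_
    · rintro U (((⟨p, -, rfl⟩ | ⟨e, -, rfl⟩) | ⟨e, -, rfl⟩) | rfl)
      · exact isOpen_Ioo
      · exact isOpen_Iio
      · exact isOpen_Ioi
      · exact isOpen_univ
    · intro a u hau hu
      by_cases hl : ∃ l, l < a
      · by_cases hup : ∃ v, a < v
        · obtain ⟨l, v, hav, hsub⟩ :=
            (mem_nhds_iff_exists_Ioo_subset' hl hup).1 (hu.mem_nhds hau)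
          obtain ⟨l', hl'E, hll', hl'a⟩ := hshrL l a hav.1
          obtain ⟨v', hv'E, hv'v, hav'⟩ := hshrR a v hav.2
          refine ⟨Ioo l' v', Or.inl (Or.inl (Or.inl ⟨(l', v'), ⟨hl'E, hv'E⟩, rfl⟩)),
            ⟨hl'a, hav'⟩, ?_⟩
          exact (Ioo_subset_Ioo hll' hv'v).trans hsub
        · obtain ⟨l, hla, hsub⟩ := exists_Ioc_subset_of_mem_nhds (hu.mem_nhds hau) hl
          obtain ⟨l', hl'E, hll', hl'a⟩ := hshrL l a hla
          refine ⟨Ioi l', Or.inl (Or.inr ⟨l', hl'E, rfl⟩), hl'a, ?_⟩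
          intro z hz
          exact hsub ⟨lt_of_le_of_lt hll' hz, not_lt.1 fun h => hup ⟨z, h⟩⟩
      · by_cases hup : ∃ v, a < v
        · obtain ⟨v, hav, hsub⟩ := exists_Ico_subset_of_mem_nhds (hu.mem_nhds hau) hup
          obtain ⟨v', hv'E, hv'v, hav'⟩ := hshrR a v hav
          refine ⟨Iio v', Or.inl (Or.inl (Or.inr ⟨v', hv'E, rfl⟩)), hav', ?_⟩
          intro z hz
          exact hsub ⟨not_lt.1 fun h => hl ⟨z, h⟩, lt_of_lt_of_le hz hv'v⟩
        · refine ⟨univ, Or.inr rfl, trivial, ?_⟩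
          intro z _
          have : z = a := le_antisymm (not_lt.1 fun h => hup ⟨z, h⟩)
            (not_lt.1 fun h => hl ⟨z, h⟩)
          exact this ▸ hau
  refine weight_le hSbasis ?_
  have hprod : Cardinal.mk ↥(E ×ˢ E) ≤ κ := by
    rw [Cardinal.mk_congr (Equiv.Set.prod E E)]
    calc Cardinal.mk (↥E × ↥E) = Cardinal.mk ↥E * Cardinal.mk ↥E := by
          simp [Cardinal.mk_prod]
      _ ≤ κ * κ := mul_le_mul' hEcard hEcard
      _ = κ := Cardinal.mul_eq_self hκ
  have h1 : Cardinal.mk ↥((fun p : K × K => Ioo p.1 p.2) '' (E ×ˢ E)) ≤ κ :=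
    Cardinal.mk_image_le.trans hprod
  have h2 : Cardinal.mk ↥((fun e : K => Iio e) '' E) ≤ κ := Cardinal.mk_image_le.trans hEcard
  have h3 : Cardinal.mk ↥((fun e : K => Ioi e) '' E) ≤ κ := Cardinal.mk_image_le.trans hEcard
  have h4 : Cardinal.mk ↥({univ} : Set (Set K)) ≤ κ := by
    simpa using le_trans (le_of_lt Cardinal.one_lt_aleph0) hκ
  calc Cardinal.mk ↥S ≤ _ := Cardinal.mk_union_le _ _
    _ ≤ κ := Cardinal.add_le_of_le hκ
        ((Cardinal.mk_union_le _ _).trans (Cardinal.add_le_of_le hκ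
          ((Cardinal.mk_union_le _ _).trans (Cardinal.add_le_of_le hκ h1 h2)) h3)) h4

end Weight2


/-! ### finite case: order topology on a finite discrete space -/

lemma orderTopology_of_discrete_finite {α : Type*} [LinearOrder α] [Finite α]
    [TopologicalSpace α] [DiscreteTopology α] : OrderTopology α := by
  constructor
  rw [DiscreteTopology.eq_bot (α := α)]
  symm
  rw [← le_bot_iff]
  intro U _
  letI t' := generateFrom {s : Set α | ∃ a, s = Ioi a ∨ s = Iio a}
  show IsOpen[t'] U
  have hsingle : ∀ x : α, IsOpen[t'] {x} := by
    intro x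
    have heq : {x} = (⋂ y ∈ Iio x, Ioi y) ∩ (⋂ y ∈ Ioi x, Iio y) := by
      apply Subset.antisymm
      · rintro z rfl
        exact ⟨mem_biInter fun y hy => hy, mem_biInter fun y hy => hy⟩
      · rintro z ⟨h1, h2⟩
        rcases lt_trichotomy z x with h | h | h
        · exact absurd (mem_iInter₂.1 h1 z h) (by simp)
        · exact h ▸ rfl
        · exact absurd (mem_iInter₂.1 h2 z h) (by simp)
    rw [heq]
    refine IsOpen.inter ?_ ?_
    · exact (Set.toFinite (Iio x)).isOpen_biInter
        (fun y _ => isOpen_generateFrom_of_mem ⟨y, Or.inl rfl⟩)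
    · exact (Set.toFinite (Ioi x)).isOpen_biInter
        (fun y _ => isOpen_generateFrom_of_mem ⟨y, Or.inr rfl⟩)
  have : U = ⋃ x ∈ U, {x} := by simp
  rw [this]
  exact isOpen_biUnion fun x _ => hsingle x

end CIPB


open CIPB Set Topology TopologicalSpace Function in
theorem cardinal_invariants_pull_back (X : Type u) [TopologicalSpace X] [T2Space X]
    (hX : ContinuousImageOfCompactLOTS X) :
    ∃ (K : Type u) (lo : LinearOrder K) (tK : TopologicalSpace K),
      letI := lo; letI := tK;
      OrderTopology K ∧ CompactSpace K ∧
        ∃ f : K → X, Continuous f ∧ Function.Surjective f ∧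
          (∀ k : K, nhdsChar K k ≤ nhdsChar X (f k)) ∧ spaceChar K ≤ spaceChar X ∧
          cellularity K = cellularity X ∧ density K = density X ∧ weight K = weight X := by
  classical
  by_cases hfin : Finite X
  · -- finite case: `X` itself with any linear order is a compact LOTS
    obtain ⟨n, ⟨e⟩⟩ := Finite.exists_equiv_fin X
    letI lo : LinearOrder X := LinearOrder.lift' e e.injective
    haveI : DiscreteTopology X := Finite.instDiscreteTopology
    haveI hot : OrderTopology X := orderTopology_of_discrete_finite
    exact ⟨X, lo, ‹TopologicalSpace X›, hot, Finite.compactSpace, id, continuous_id,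
      Function.surjective_id, fun k => le_refl (nhdsChar X k), le_rfl, rfl, rfl, rfl⟩
  · haveI hXinf : Infinite X := not_finite_iff_infinite.1 hfin
    obtain ⟨L, loL, tL, h⟩ := hX
    letI := loL; letI := tL
    obtain ⟨hOTL, hCL, g, hgc, hgs⟩ := h
    haveI := hOTL; haveI := hCL
    haveI hCX : CompactSpace X := ⟨by
      rw [← Set.range_eq_univ.2 hgs]
      exact isCompact_range hgc⟩
    -- Step 1: a minimal closed subset mapping onto X
    obtain ⟨A, -, hAmin⟩ : ∃ A, A ⊆ univ ∧
        Minimal (· ∈ {A : Set L | IsClosed A ∧ g '' A = univ}) A := by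
      refine zorn_superset_nonempty _ ?_ univ ⟨isClosed_univ, by
        rw [image_univ]; exact range_eq_univ.2 hgs⟩
      intro c hcP hchain hcne
      refine ⟨⋂₀ c, ⟨isClosed_sInter (fun A hA => (hcP hA).1), ?_⟩,
        fun A hA => sInter_subset_of_mem hA⟩
      apply Subset.antisymm (subset_univ _)
      intro x _
      haveI : Nonempty ↥c := hcne.to_subtype
      have hdir : Directed (· ⊇ ·) (fun A : ↥c => A.val ∩ g ⁻¹' {x}) := by
        intro A B
        rcases hchain.total A.2 B.2 with h | h
        · exact ⟨A, Subset.rfl, inter_subset_inter_left _ h⟩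
        · exact ⟨B, inter_subset_inter_left _ h, Subset.rfl⟩
      have hne : ∀ A : ↥c, (A.val ∩ g ⁻¹' {x}).Nonempty := by
        intro A
        have h2 : x ∈ g '' A.val := by rw [(hcP A.2).2]; trivial
        obtain ⟨k, hk, hgk⟩ := h2
        exact ⟨k, hk, hgk⟩
      obtain ⟨k, hk⟩ := IsCompact.nonempty_iInter_of_directed_nonempty_isCompact_isClosed
        _ hdir hne
        (fun A => ((hcP A.2).1.inter (isClosed_singleton.preimage hgc)).isCompact)
        (fun A => (hcP A.2).1.inter (isClosed_singleton.preimage hgc))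
      have hk1 : k ∈ ⋂₀ c := by
        intro A hA
        exact (mem_iInter.1 hk ⟨A, hA⟩).1
      have hk2 : g k = x := by
        obtain ⟨A⟩ := ‹Nonempty ↥c›
        exact (mem_iInter.1 hk A).2
      exact ⟨k, hk1, hk2⟩
    have hAcl : IsClosed A := hAmin.prop.1
    -- Step 2: the subtype is a compact LOTS
    haveI hcsub : CompactSpace ↥A := isCompact_iff_compactSpace.1 hAcl.isCompact
    have htopeq : (instTopologicalSpaceSubtype : TopologicalSpace ↥A) =
        generateFrom {s : Set ↥A | ∃ a, s = Ioi a ∨ s = Iio a} := by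
      refine topology_eq_of_le_of_compact ?_ hcsub ?_
      · rw [le_generateFrom_iff_subset_isOpen]
        rintro s ⟨a, rfl | rfl⟩
        · have : (Ioi a : Set ↥A) = Subtype.val ⁻¹' (Ioi a.val) := by
            ext z; exact Subtype.coe_lt_coe.symm
          rw [this]
          exact isOpen_Ioi.preimage continuous_subtype_val
        · have : (Iio a : Set ↥A) = Subtype.val ⁻¹' (Iio a.val) := by
            ext z; exact Subtype.coe_lt_coe.symm
          rw [this]
          exact isOpen_Iio.preimage continuous_subtype_val
      · letI t2 : TopologicalSpace ↥A :=
          generateFrom {s : Set ↥A | ∃ a, s = Ioi a ∨ s = Iio a}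
        haveI : @OrderTopology ↥A t2 _ := ⟨rfl⟩
        infer_instance
    haveI hOTA : OrderTopology ↥A := ⟨htopeq⟩
    set g₁ : ↥A → X := fun a => g a.val with hg₁def
    have hg₁c : Continuous g₁ := hgc.comp continuous_subtype_val
    have hg₁s : Surjective g₁ := by
      intro x
      have h2 : x ∈ g '' A := by rw [hAmin.prop.2]; trivial
      obtain ⟨k, hkA, hgk⟩ := h2
      exact ⟨⟨k, hkA⟩, hgk⟩
    -- Step 3: quotient by order components of fibers
    set r : ↥A → ↥A → Prop := fun a b => Set.uIcc a b ⊆ g₁ ⁻¹' {g₁ a} with hrdef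
    have hrval : ∀ {a b}, r a b → g₁ b = g₁ a := fun {a b} h => h Set.right_mem_uIcc
    have hrrefl : ∀ a, r a a := by
      intro a z hz
      rw [Set.uIcc_self, mem_singleton_iff] at hz
      simp [hz]
    have hrsymm : ∀ {a b}, r a b → r b a := by
      intro a b h z hz
      rw [Set.uIcc_comm] at hz
      have := h hz
      simp only [mem_preimage, mem_singleton_iff] at *
      rw [this, ← hrval h]
    have hrtrans : ∀ {a b c}, r a b → r b c → r a c := by
      intro a b c hab hbc z hz
      rcases (Set.uIcc_subset_uIcc_union_uIcc (b := b)) hz with h | h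
      · exact hab h
      · have h2 := hbc h
        simp only [mem_preimage, mem_singleton_iff] at *
        rw [h2, hrval hab]
    have hrconv : ∀ {a b}, r a b → ∀ {c}, c ∈ Set.uIcc a b → r a c := by
      intro a b h c hc z hz
      exact h (Set.uIcc_subset_uIcc Set.left_mem_uIcc hc hz)
    have hcross : ∀ {a b a' b' : ↥A}, a < b → b' ≤ a' → r a a' → r b b' → r a b := by
      intro a b a' b' hab hba' haa' hbb'
      rcases le_or_gt a b' with h | h
      · have hb' : r a b' := hrconv haa' (Set.mem_uIcc.2 (Or.inl ⟨h, hba'⟩))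
        exact hrtrans hb' (hrsymm hbb')
      · have h2 : r b a := hrconv hbb' (Set.mem_uIcc.2 (Or.inr ⟨h.le, hab.le⟩))
        exact hrsymm h2
    set s : Setoid ↥A := ⟨r, ⟨hrrefl, fun {a b} => hrsymm, fun {a b c} => hrtrans⟩⟩
      with hsdef
    have hledef : ∀ a b a' b' : ↥A, r a a' → r b b' →
        (r a b ∨ a < b) → (r a' b' ∨ a' < b') := by
      intro a b a' b' haa' hbb' h
      rcases h with h | h
      · exact Or.inl (hrtrans (hrtrans (hrsymm haa') h) hbb')
      · by_cases h2 : r a' b'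
        · exact Or.inl h2
        · refine Or.inr (lt_of_not_ge fun h3 => ?_)
          have h4 := hcross h h3 haa' hbb'
          exact h2 (hrtrans (hrtrans (hrsymm haa') h4) hbb')
    letI lin : LinearOrder (Quotient s) :=
      { le := Quotient.lift₂ (fun a b => r a b ∨ a < b)
          (fun a b a' b' ha hb => propext
            ⟨hledef a b a' b' ha hb, hledef a' b' a b (hrsymm ha) (hrsymm hb)⟩)
        lt := fun x y => Quotient.lift₂ (fun a b => r a b ∨ a < b)
            (fun a b a' b' ha hb => propext
              ⟨hledef a b a' b' ha hb, hledef a' b' a b (hrsymm ha) (hrsymm hb)⟩) x y ∧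
          ¬ Quotient.lift₂ (fun a b => r a b ∨ a < b)
            (fun a b a' b' ha hb => propext
              ⟨hledef a b a' b' ha hb, hledef a' b' a b (hrsymm ha) (hrsymm hb)⟩) y x
        le_refl := by rintro ⟨a⟩; exact Or.inl (hrrefl a)
        le_trans := by
          rintro ⟨a⟩ ⟨b⟩ ⟨c⟩ hab hbc
          replace hab : r a b ∨ a < b := hab
          replace hbc : r b c ∨ b < c := hbc
          show r a c ∨ a < c
          rcases hab with hab | hab <;> rcases hbc with hbc | hbc
          · exact Or.inl (hrtrans hab hbc)
          · rcases lt_trichotomy a c with h | h | h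
            · exact Or.inr h
            · exact Or.inl (h ▸ hrrefl a)
            · exact Or.inl (hrconv hab (Set.mem_uIcc.2 (Or.inr ⟨hbc.le, h.le⟩)))
          · rcases lt_trichotomy a c with h | h | h
            · exact Or.inr h
            · exact Or.inl (h ▸ hrrefl a)
            · have h1 : r b a := hrconv hbc (Set.mem_uIcc.2 (Or.inr ⟨h.le, hab.le⟩))
              exact Or.inl (hrtrans (hrsymm h1) hbc)
          · exact Or.inr (hab.trans hbc)
        le_antisymm := by
          rintro ⟨a⟩ ⟨b⟩ h1 h2
          replace h1 : r a b ∨ a < b := h1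
          replace h2 : r b a ∨ b < a := h2
          rcases h1 with h1 | h1
          · exact Quotient.sound h1
          · rcases h2 with h2 | h2
            · exact (Quotient.sound (hrsymm h2))
            · exact absurd h1 (lt_asymm h2)
        le_total := by
          rintro ⟨a⟩ ⟨b⟩
          show (r a b ∨ a < b) ∨ (r b a ∨ b < a)
          rcases lt_trichotomy a b with h | h | h
          · exact Or.inl (Or.inr h)
          · exact Or.inl (Or.inl (h ▸ hrrefl a))
          · exact Or.inr (Or.inr h)
        toDecidableLE := fun a b => Classical.dec _ }
    letI : PartialOrder (Quotient s) := lin.toPartialOrder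
    letI : Preorder (Quotient s) := lin.toPreorder
    letI : LE (Quotient s) := lin.toLE
    letI : LT (Quotient s) := lin.toLT
    set q : ↥A → Quotient s := Quotient.mk s with hqdef
    have hqs : Surjective q := Quotient.mk_surjective
    have hlek : ∀ a b : ↥A, (q a ≤ q b) ↔ (r a b ∨ a < b) := fun _ _ => Iff.rfl
    have hqmono : Monotone q := by
      intro a b hab
      rcases eq_or_lt_of_le hab with rfl | h
      · exact le_rfl
      · exact Or.inr h
    have hltk : ∀ a b : ↥A, (q a < q b) ↔ (a < b ∧ ¬ r a b) := by
      intro a b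
      rw [lt_iff_le_not_ge, hlek, hlek]
      constructor
      · rintro ⟨h1, h2⟩
        rw [not_or] at h2
        rcases h1 with h1 | h1
        · exact absurd (hrsymm h1) h2.1
        · exact ⟨h1, fun h => h2.1 (hrsymm h)⟩
      · rintro ⟨h1, h2⟩
        exact ⟨Or.inr h1, not_or.2 ⟨fun h => h2 (hrsymm h), fun h => absurd h1 (lt_asymm h)⟩⟩
    -- greatest and least elements of classes
    have hclasscl : ∀ a : ↥A, IsClosed {b | r a b} := by
      intro a
      have heq : {b | r a b} = OC a (g₁ ⁻¹' {g₁ a}) := rfl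
      rw [heq]
      exact isClosed_OC (isClosed_singleton.preimage hg₁c) rfl
    have hσ : ∀ a : ↥A, ∃ σ, r a σ ∧ ∀ b, r a b → b ≤ σ := by
      intro a
      obtain ⟨σ, hmem, hub⟩ :=
        ((hclasscl a).isCompact).exists_isGreatest ⟨a, hrrefl a⟩
      exact ⟨σ, hmem, fun b hb => hub hb⟩
    have hι : ∀ a : ↥A, ∃ ι, r a ι ∧ ∀ b, r a b → ι ≤ b := by
      intro a
      obtain ⟨ι, hmem, hlb⟩ :=
        ((hclasscl a).isCompact).exists_isLeast ⟨a, hrrefl a⟩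
      exact ⟨ι, hmem, fun b hb => hlb hb⟩
    choose σ hσ1 hσ2 using hσ
    choose ι hι1 hι2 using hι
    letI tK : TopologicalSpace (Quotient s) := Preorder.topology (Quotient s)
    haveI hOTK : OrderTopology (Quotient s) := ⟨rfl⟩
    have hqc : Continuous q := by
      refine continuous_generateFrom_iff.2 ?_
      rintro U ⟨u, rfl | rfl⟩
      · obtain ⟨a, rfl⟩ := hqs u
        have heq : q ⁻¹' Ioi (q a) = Ioi (σ a) := by
          ext z
          simp only [mem_preimage, mem_Ioi]
          constructor
          · intro h
            rw [hltk] at h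
            by_contra hz
            push_neg at hz
            exact h.2 (hrconv (hσ1 a) (Set.mem_uIcc.2 (Or.inl ⟨h.1.le, hz⟩)))
          · intro h
            rw [hltk]
            refine ⟨lt_of_le_of_lt (hσ2 a a (hrrefl a)) h, fun hr' => ?_⟩
            exact absurd (hσ2 a z hr') (not_le.2 h)
        show IsOpen (q ⁻¹' Ioi (q a))
        rw [heq]
        exact isOpen_Ioi
      · obtain ⟨a, rfl⟩ := hqs u
        have heq : q ⁻¹' Iio (q a) = Iio (ι a) := by
          ext z
          simp only [mem_preimage, mem_Iio]
          constructor
          · intro h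
            rw [hltk] at h
            by_contra hz
            push_neg at hz
            exact h.2 (hrsymm (hrconv (hι1 a) (Set.mem_uIcc.2 (Or.inr ⟨hz, h.1.le⟩))))
          · intro h
            rw [hltk]
            refine ⟨lt_of_lt_of_le h (hι2 a a (hrrefl a)), fun hr' => ?_⟩
            exact absurd (hι2 a z (hrsymm hr')) (not_le.2 h)
        show IsOpen (q ⁻¹' Iio (q a))
        rw [heq]
        exact isOpen_Iio
    haveI hCK : CompactSpace (Quotient s) := ⟨by
      have h2 := (isCompact_univ (X := ↥A)).image hqc
      rwa [image_univ, Set.range_eq_univ.2 hqs] at h2⟩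
    set fK : Quotient s → X := Quotient.lift g₁ (fun a b hab => (hrval hab).symm)
      with hfKdef
    have hfq : ∀ a : ↥A, fK (q a) = g₁ a := fun a => rfl
    have hfs : Surjective fK := by
      intro x
      obtain ⟨a, ha⟩ := hg₁s x
      exact ⟨q a, ha⟩
    have hqm : IsQuotientMap q := (hqc.isClosedMap).isQuotientMap hqc hqs
    have hfc : Continuous fK := hqm.continuous_iff.2 hg₁c
    -- order-lightness
    have hlight : ∀ a b : Quotient s, Set.uIcc a b ⊆ fK ⁻¹' {fK a} → b = a := by
      rintro ⟨a⟩ ⟨b⟩ h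
      have hr' : r a b := by
        intro z hz
        have hzq : q z ∈ Set.uIcc (q a) (q b) := by
          rcases Set.mem_uIcc.1 hz with ⟨h1, h2⟩ | ⟨h1, h2⟩
          · exact Set.mem_uIcc.2 (Or.inl ⟨hqmono h1, hqmono h2⟩)
          · exact Set.mem_uIcc.2 (Or.inr ⟨hqmono h1, hqmono h2⟩)
        exact h hzq
      exact Quotient.sound (hrsymm hr')
    -- irreducibility
    have hirr : ∀ C : Set (Quotient s), IsClosed C → C ≠ univ → fK '' C ≠ univ := by
      intro C hCcl hCne hCuniv
      have hBcl : IsClosed (Subtype.val '' (q ⁻¹' C)) :=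
        hAcl.isClosedEmbedding_subtypeVal.isClosedMap _ (hCcl.preimage hqc)
      have hBim : g '' (Subtype.val '' (q ⁻¹' C)) = univ := by
        apply Subset.antisymm (subset_univ _)
        intro x _
        have h2 : x ∈ fK '' C := by rw [hCuniv]; trivial
        obtain ⟨kq, hkq, hfkq⟩ := h2
        obtain ⟨z, rfl⟩ := hqs kq
        exact ⟨z.val, ⟨z, hkq, rfl⟩, hfkq⟩
      have hsub : A ⊆ Subtype.val '' (q ⁻¹' C) :=
        hAmin.2 ⟨hBcl, hBim⟩ (by rintro _ ⟨z, -, rfl⟩; exact z.2)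
      apply hCne
      apply Subset.antisymm (subset_univ _)
      rintro zq -
      obtain ⟨z, rfl⟩ := hqs zq
      obtain ⟨w, hw, hwz⟩ := hsub z.2
      rwa [show w = z from Subtype.ext hwz] at hw
    -- conclusions
    haveI : Infinite (Quotient s) := Infinite.of_surjective fK hfs
    have hpoint : ∀ k : Quotient s, nhdsChar (Quotient s) k ≤ nhdsChar X (fK k) :=
      fun k => nhdsChar_le_of_light hfc hlight k
    have hcell : cellularity (Quotient s) = cellularity X :=
      cellularity_eq_of_irr hfc hfs (hfc.isClosedMap) hirr
    have hdens : density (Quotient s) = density X :=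
      density_eq_of_irr hfc hfs (hfc.isClosedMap) hirr
    have hweight : weight (Quotient s) = weight X := by
      refine le_antisymm ?_ (weight_image_le hfc hfs)
      refine weight_le_weight_image hfc hfs hlight ?_ ?_
      · rw [hcell]; exact cellularity_le_weight X
      · rw [hdens]; exact density_le_weight X
    have hchi : spaceChar (Quotient s) ≤ spaceChar X := by
      refine ciSup_le' ?_
      intro k
      exact (hpoint k).trans (le_ciSup (Cardinal.bddAbove_range _) (fK k))
    exact ⟨Quotient s, lin, tK, hOTK, hCK, fK, hfc, hfs, hpoint, hchi, hcell, hdens,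
      hweight⟩
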